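/- Let W be the symmetric group S_{n+1} viewed as a Coxeter group of type A_n with simple reflections s_1, ..., s_n. Then (w₀^{I−{1}} w₀^I) ▷ w₀^{I−{1}} = w₀^{I−{1,2}}, where w₀^J denotes the longest element of the parabolic subgroup W_J and ▷ is defined by x ▷ y = min{uy : u ≤ x} in Bruhat order. -/

import Mathlib

set_option maxHeartbeats 1000000

/-- The Bruhat order on a Coxeter group, via the subword property: `x ≤ y` iff some
reduced word for `y` has a subword whose product is `x`. -/
def CoxeterSystem.bruhatLE {B W : Type*} [Group W] {M : CoxeterMatrix B}
    (cs : CoxeterSystem M W) (x y : W) : Prop :=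
  ∃ ω ω' : List B, cs.IsReduced ω ∧ cs.wordProd ω = y ∧
    List.Sublist ω' ω ∧ cs.wordProd ω' = x

/-- The set of products `u * y` with `u ≤ x` in the Bruhat order. -/
def CoxeterSystem.triSet {B W : Type*} [Group W] {M : CoxeterMatrix B}
    (cs : CoxeterSystem M W) (x y : W) : Set W :=
  {w | ∃ u : W, cs.bruhatLE u x ∧ w = u * y}

/-- `m` is the unique minimal element of `S` with respect to the Bruhat order. -/
def CoxeterSystem.IsUniqueBruhatMin {B W : Type*} [Group W] {M : CoxeterMatrix B}
    (cs : CoxeterSystem M W) (S : Set W) (m : W) : Prop :=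
  (m ∈ S ∧ ∀ z ∈ S, cs.bruhatLE z m → z = m) ∧
    ∀ z ∈ S, (∀ z' ∈ S, cs.bruhatLE z' z → z' = z) → z = m


namespace TriAux

open CoxeterSystem List Equiv

variable {n : ℕ}

/-- The adjacent transposition corresponding to simple reflection `i`. -/
def sw (i : Fin n) : Equiv.Perm (Fin (n + 1)) := Equiv.swap i.castSucc i.succ

lemma sw_apply_val (i : Fin n) (x : Fin (n + 1)) :
    ((sw i) x).val = if x.val = i.val then i.val + 1
      else if x.val = i.val + 1 then i.val else x.val := by
  unfold sw
  rw [Equiv.swap_apply_def]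
  split_ifs <;> simp_all [Fin.ext_iff]

lemma sw_val_cases (i : Fin n) (x : Fin (n + 1)) :
    (x.val = i.val ∧ ((sw i) x).val = i.val + 1) ∨
    (x.val = i.val + 1 ∧ ((sw i) x).val = i.val) ∨
    (x.val ≠ i.val ∧ x.val ≠ i.val + 1 ∧ ((sw i) x).val = x.val) := by
  have h := sw_apply_val i x
  split_ifs at h <;> tauto

lemma sw_sw (i : Fin n) : sw i * sw i = 1 := Equiv.swap_mul_self _ _

lemma liftable : (CoxeterMatrix.Aₙ n).IsLiftable sw := by
  intro i j
  have hM : (CoxeterMatrix.Aₙ n) i j =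
      if i = j then 1 else (if (j : ℕ) + 1 = i ∨ (i : ℕ) + 1 = j then 3 else 2) := rfl
  rw [hM]
  rcases eq_or_ne i j with rfl | hij
  · simp [sw_sw]
  · have hvij : (i : ℕ) ≠ (j : ℕ) := fun h => hij (Fin.ext h)
    simp only [hij, if_false]
    by_cases hadj : (j : ℕ) + 1 = i ∨ (i : ℕ) + 1 = j
    · simp only [hadj, if_true]
      have hpow : (sw i * sw j) ^ 3 = sw i * (sw j * (sw i * (sw j * (sw i * sw j)))) := by
        simp [pow_succ, mul_assoc]
      ext a
      simp only [hpow, Equiv.Perm.mul_apply, Equiv.Perm.one_apply]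
      have ha := a.isLt
      have hi := i.isLt
      have hj := j.isLt
      have h1 := sw_val_cases j a
      have h2 := sw_val_cases i ((sw j) a)
      have h3 := sw_val_cases j ((sw i) ((sw j) a))
      have h4 := sw_val_cases i ((sw j) ((sw i) ((sw j) a)))
      have h5 := sw_val_cases j ((sw i) ((sw j) ((sw i) ((sw j) a))))
      have h6 := sw_val_cases i ((sw j) ((sw i) ((sw j) ((sw i) ((sw j) a)))))
      omega
    · rw [if_neg hadj]
      push_neg at hadj
      have hpow : (sw i * sw j) ^ 2 = sw i * (sw j * (sw i * sw j)) := by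
        simp [pow_succ, mul_assoc]
      ext a
      simp only [hpow, Equiv.Perm.mul_apply, Equiv.Perm.one_apply]
      have ha := a.isLt
      have h1 := sw_val_cases j a
      have h2 := sw_val_cases i ((sw j) a)
      have h3 := sw_val_cases j ((sw i) ((sw j) a))
      have h4 := sw_val_cases i ((sw j) ((sw i) ((sw j) a)))
      omega


/-- The inversion set of a permutation of `Fin (n+1)`. -/
def invSet (σ : Equiv.Perm (Fin (n + 1))) : Finset (Fin (n + 1) × Fin (n + 1)) :=
  Finset.univ.filter fun p => p.1 < p.2 ∧ σ p.2 < σ p.1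

/-- The inversion number of a permutation of `Fin (n+1)`. -/
def inv (σ : Equiv.Perm (Fin (n + 1))) : ℕ := (invSet σ).card

lemma mem_invSet {σ : Equiv.Perm (Fin (n + 1))} {p : Fin (n + 1) × Fin (n + 1)} :
    p ∈ invSet σ ↔ p.1 < p.2 ∧ σ p.2 < σ p.1 := by
  simp [invSet]

lemma inv_one : inv (1 : Equiv.Perm (Fin (n + 1))) = 0 := by
  have : invSet (1 : Equiv.Perm (Fin (n + 1))) = ∅ := by
    ext p
    simp only [mem_invSet, Finset.notMem_empty, iff_false, not_and]
    intro h
    simp only [Equiv.Perm.one_apply]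
    exact lt_asymm h
  simp [inv, this]

lemma sw_sw_apply (i : Fin n) (x : Fin (n + 1)) : (sw i) ((sw i) x) = x := by
  unfold sw; exact Equiv.swap_apply_self _ _ _

/-- Multiplying on the right by an adjacent transposition at an ascent adds one inversion. -/
lemma inv_mul_sw_of_ascent {σ : Equiv.Perm (Fin (n + 1))} {i : Fin n}
    (h : σ i.castSucc < σ i.succ) : inv (σ * sw i) = inv σ + 1 := by
  classical
  set q : Fin (n + 1) × Fin (n + 1) := (i.castSucc, i.succ) with hq
  -- q is an inversion of σ * sw i
  have hmemq : q ∈ invSet (σ * sw i) := by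
    rw [mem_invSet]
    constructor
    · exact Fin.castSucc_lt_succ
    · show σ ((sw i) i.succ) < σ ((sw i) i.castSucc)
      unfold sw
      rw [Equiv.swap_apply_left, Equiv.swap_apply_right]
      exact h
  have hnotq : q ∉ invSet σ := by
    rw [mem_invSet]
    rintro ⟨-, h2⟩
    exact absurd h (lt_asymm h2)
  -- the bijection
  have hcard : (invSet σ).card = ((invSet (σ * sw i)).erase q).card := by
    apply Finset.card_bij' (fun p _ => ((sw i) p.1, (sw i) p.2))
      (fun p _ => ((sw i) p.1, (sw i) p.2))
    · -- maps into erase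
      intro p hp
      have hpq : p ≠ q := fun hh => hnotq (hh ▸ hp)
      rw [mem_invSet] at hp
      obtain ⟨h1, h2⟩ := hp
      have hval : p.1.val ≠ i.val ∨ p.2.val ≠ i.val + 1 := by
        by_contra hc
        push_neg at hc
        exact hpq (Prod.ext (Fin.ext (by simp [hq, hc.1])) (Fin.ext (by simp [hq, hc.2])))
      rw [Finset.mem_erase, mem_invSet]
      have hlt : (sw i) p.1 < (sw i) p.2 := by
        rw [Fin.lt_def] at h1 ⊢
        have c1 := sw_val_cases i p.1
        have c2 := sw_val_cases i p.2
        omega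
      refine ⟨?_, hlt, ?_⟩
      · intro hh
        have hh1 : (sw i) p.1 = i.castSucc := congrArg Prod.fst hh
        have hh2 : (sw i) p.2 = i.succ := congrArg Prod.snd hh
        have e1 : ((sw i) p.1).val = i.val := by rw [hh1]; simp
        have e2 : ((sw i) p.2).val = i.val + 1 := by rw [hh2]; simp
        have c1 := sw_val_cases i p.1
        have c2 := sw_val_cases i p.2
        rw [Fin.lt_def] at h1
        omega
      · show σ ((sw i) ((sw i) p.2)) < σ ((sw i) ((sw i) p.1))
        rw [sw_sw_apply, sw_sw_apply]
        exact h2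
    · -- reverse direction
      intro p hp
      rw [Finset.mem_erase, mem_invSet] at hp
      obtain ⟨hpq, h1, h2⟩ := hp
      rw [mem_invSet]
      have h2' : σ ((sw i) p.2) < σ ((sw i) p.1) := by
        have e2 : (σ * sw i) p.2 = σ ((sw i) p.2) := rfl
        have e1 : (σ * sw i) p.1 = σ ((sw i) p.1) := rfl
        rw [e1, e2] at h2
        exact h2
      refine ⟨?_, h2'⟩
      · show (sw i) p.1 < (sw i) p.2
        rw [Fin.lt_def] at h1 ⊢
        have c1 := sw_val_cases i p.1
        have c2 := sw_val_cases i p.2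
        have hne : p.1.val ≠ i.val ∨ p.2.val ≠ i.val + 1 := by
          by_contra hc
          push_neg at hc
          exact hpq (Prod.ext (Fin.ext (by simp [hq, hc.1])) (Fin.ext (by simp [hq, hc.2])))
        omega
    · intro p _
      simp [sw_sw_apply]
    · intro p _
      simp [sw_sw_apply]
  have : inv (σ * sw i) = ((invSet (σ * sw i)).erase q).card + 1 := by
    rw [inv, ← Finset.card_erase_add_one hmemq]
  rw [this, ← hcard, inv]

/-- Multiplying on the right by an adjacent transposition at a descent removes one inversion. -/
lemma inv_mul_sw_of_descent {σ : Equiv.Perm (Fin (n + 1))} {i : Fin n}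
    (h : σ i.succ < σ i.castSucc) : inv (σ * sw i) + 1 = inv σ := by
  have key : (σ * sw i) i.castSucc < (σ * sw i) i.succ := by
    show σ ((sw i) i.castSucc) < σ ((sw i) i.succ)
    unfold sw
    rw [Equiv.swap_apply_left, Equiv.swap_apply_right]
    exact h
  have := inv_mul_sw_of_ascent key
  rw [mul_assoc, sw_sw, mul_one] at this
  omega

lemma inv_mul_sw_le (σ : Equiv.Perm (Fin (n + 1))) (i : Fin n) :
    inv (σ * sw i) ≤ inv σ + 1 := by
  rcases lt_or_ge (σ i.castSucc) (σ i.succ) with h | h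
  · rw [inv_mul_sw_of_ascent h]
  · have hne : σ i.succ ≠ σ i.castSucc := fun hh =>
      (Fin.castSucc_lt_succ (i := i)).ne (σ.injective hh.symm)
    have h' : σ i.succ < σ i.castSucc := lt_of_le_of_ne h hne
    have := inv_mul_sw_of_descent h'
    omega


section CoxeterPart

open CoxeterSystem

variable {W : Type*} [Group W] (cs : CoxeterSystem (CoxeterMatrix.Aₙ n) W)

local prefix:100 "ℓ" => cs.length
local prefix:100 "π" => cs.wordProd
local prefix:100 "s" => cs.simple

/-- The permutation representation of the type `Aₙ` Coxeter system. -/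
def phi : W →* Equiv.Perm (Fin (n + 1)) := cs.lift ⟨sw, liftable⟩

lemma phi_simple (i : Fin n) : phi cs (s i) = sw i :=
  cs.lift_apply_simple liftable i

lemma inv_phi_wordProd_le (ω : List (Fin n)) : inv (phi cs (π ω)) ≤ ω.length := by
  induction ω using List.reverseRecOn with
  | nil => simp [inv_one]
  | append_singleton ω i ih =>
      rw [cs.wordProd_append, cs.wordProd_singleton, map_mul, phi_simple]
      calc inv (phi cs (π ω) * sw i) ≤ inv (phi cs (π ω)) + 1 := inv_mul_sw_le _ _
        _ ≤ ω.length + 1 := by omega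
        _ = (ω ++ [i]).length := by simp

lemma simple_comm {i j : Fin n} (h : (j : ℕ) + 1 ≠ i ∧ (i : ℕ) + 1 ≠ j) (hij : i ≠ j) :
    s i * s j = s j * s i := by
  have hM : (CoxeterMatrix.Aₙ n) i j = 2 := by
    show (if i = j then 1 else (if (j : ℕ) + 1 = i ∨ (i : ℕ) + 1 = j then 3 else 2)) = 2
    rw [if_neg hij, if_neg (by push_neg; exact h)]
  have h2 := cs.simple_mul_simple_pow i j
  rw [hM, pow_two] at h2
  have h3 : s i * s j = (s i * s j)⁻¹ := eq_inv_of_mul_eq_one_left h2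
  rw [h3, mul_inv_rev, cs.inv_simple, cs.inv_simple]

lemma simple_braid {i j : Fin n} (h : (j : ℕ) + 1 = i ∨ (i : ℕ) + 1 = j) (hij : i ≠ j) :
    s i * s j * s i = s j * s i * s j := by
  have hM : (CoxeterMatrix.Aₙ n) i j = 3 := by
    show (if i = j then 1 else (if (j : ℕ) + 1 = i ∨ (i : ℕ) + 1 = j then 3 else 2)) = 3
    rw [if_neg hij, if_pos h]
  have h2 := cs.simple_mul_simple_pow i j
  rw [hM] at h2
  rw [show (3 : ℕ) = 2 + 1 from rfl, pow_succ, pow_two] at h2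
  have h4 : (s i * s j * s i) * (s j * s i * s j) = 1 := by
    calc (s i * s j * s i) * (s j * s i * s j)
        = s i * s j * (s i * s j) * (s i * s j) := by group
      _ = 1 := h2
  have hbb : (s j * s i * s j) * (s j * s i * s j) = 1 := by
    calc (s j * s i * s j) * (s j * s i * s j)
        = s j * s i * (s j * s j) * s i * s j := by group
      _ = s j * (s i * s i) * s j := by rw [cs.simple_mul_simple_self]; group
      _ = s j * s j := by rw [cs.simple_mul_simple_self]; group
      _ = 1 := cs.simple_mul_simple_self j
  have h5 : s i * s j * s i = (s j * s i * s j)⁻¹ := eq_inv_of_mul_eq_one_left h4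
  rw [h5, inv_eq_of_mul_eq_one_left hbb]

lemma sw_apply_castSucc_of_far {i j : Fin n} (h1 : (i : ℕ) ≠ j) (h2 : (i : ℕ) ≠ (j : ℕ) + 1) :
    (sw j) i.castSucc = i.castSucc := by
  apply Fin.ext
  rw [sw_apply_val]
  simp only [Fin.coe_castSucc]
  rw [if_neg h1, if_neg h2]

lemma sw_apply_succ_of_far {i j : Fin n} (h1 : (i : ℕ) + 1 ≠ j) (h2 : (i : ℕ) ≠ (j : ℕ)) :
    (sw j) i.succ = i.succ := by
  apply Fin.ext
  rw [sw_apply_val]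
  simp only [Fin.val_succ]
  rw [if_neg h1, if_neg (by omega)]

/-- Key lemma: a right ascent of `w` in the Coxeter group is an ascent of the
corresponding permutation. -/
lemma ascent_transfer : ∀ (N : ℕ) (w : W) (i : Fin n), ℓ w ≤ N →
    ℓ w < ℓ (w * s i) → phi cs w i.castSucc < phi cs w i.succ := by
  intro N
  induction N with
  | zero =>
      intro w i hN _
      have hw : w = 1 := cs.length_eq_zero_iff.mp (Nat.le_zero.mp hN)
      subst hw
      rw [map_one]
      exact Fin.castSucc_lt_succ
  | succ N IH =>
      intro w i hN hasc
      rcases eq_or_ne w 1 with rfl | hw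
      · rw [map_one]
        exact Fin.castSucc_lt_succ
      obtain ⟨j, hj⟩ := cs.exists_rightDescent_of_ne_one hw
      have hj' : ℓ (w * s j) < ℓ w := hj
      have hlwj : ℓ (w * s j) + 1 = ℓ w := by
        rcases cs.length_mul_simple w j with h | h
        · omega
        · exact h
      have hwpos : 1 ≤ ℓ w := by
        by_contra hc
        exact hw (cs.length_eq_zero_iff.mp (by omega))
      have hij : j ≠ i := by
        rintro rfl
        omega
      have hvij : (j : ℕ) ≠ (i : ℕ) := fun h => hij (Fin.ext h)
      set v := w * s j with hv
      have hlv : ℓ v + 1 = ℓ w := hlwj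
      have hlvN : ℓ v ≤ N := by omega
      have hphiv : phi cs v = phi cs w * sw j := by
        rw [hv, map_mul, phi_simple]
      have hvw : v * s j = w := by rw [hv]; simp
      -- v ascends at j (since v * s j = w has bigger length)
      have hvascj : ℓ v < ℓ (v * s j) := by rw [hvw]; omega
      have hIHvj := IH v j hlvN hvascj
      by_cases hfar : (j : ℕ) + 1 ≠ (i : ℕ) ∧ (i : ℕ) + 1 ≠ (j : ℕ)
      · -- commuting case
        have hvasc : ℓ v < ℓ (v * s i) := by
          by_contra hc
          push_neg at hc
          have hne := cs.length_mul_simple_ne v i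
          have hlt : ℓ (v * s i) < ℓ v := lt_of_le_of_ne hc hne
          have hcomm : s j * s i = s i * s j := simple_comm cs ⟨by omega, by omega⟩ hij
          have hkey : (v * s i) * s j = w * s i := by
            rw [hv]
            calc w * s j * s i * s j = w * (s j * s i * s j) := by group
              _ = w * (s i * s j * s j) := by rw [hcomm]
              _ = w * s i := by
                  rw [show s i * s j * s j = s i * (s j * s j) from by group,
                    cs.simple_mul_simple_self, mul_one]
          have : ℓ (w * s i) ≤ ℓ (v * s i) + 1 := by
            rw [← hkey]
            calc ℓ ((v * s i) * s j) ≤ ℓ (v * s i) + ℓ (s j) := cs.length_mul_le _ _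
              _ = ℓ (v * s i) + 1 := by rw [cs.length_simple]
          omega
        have hIHvi := IH v i hlvN hvasc
        rw [hphiv] at hIHvi
        have e1 : (sw j) i.castSucc = i.castSucc :=
          sw_apply_castSucc_of_far (by omega) (by omega)
        have e2 : (sw j) i.succ = i.succ :=
          sw_apply_succ_of_far (by omega) (by omega)
        have g1 : (phi cs w * sw j) i.castSucc = phi cs w i.castSucc := by
          show phi cs w ((sw j) i.castSucc) = _
          rw [e1]
        have g2 : (phi cs w * sw j) i.succ = phi cs w i.succ := by
          show phi cs w ((sw j) i.succ) = _
          rw [e2]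
        rwa [g1, g2] at hIHvi
      · -- adjacent case
        push_neg at hfar
        -- by contradiction
        by_contra hBA'
        have hAB_ne : phi cs w i.castSucc ≠ phi cs w i.succ := fun h =>
          (Fin.castSucc_lt_succ (i := i)).ne ((phi cs w).injective h)
        have hBA : phi cs w i.succ < phi cs w i.castSucc := by
          rcases lt_or_ge (phi cs w i.castSucc) (phi cs w i.succ) with h | h
          · exact absurd h hBA'
          · exact lt_of_le_of_ne h (fun h' => hAB_ne h'.symm)
        -- u' := v * s i, used in both adjacent sub-cases
        rcases (by omega : (j : ℕ) + 1 = (i : ℕ) ∨ (i : ℕ) + 1 = (j : ℕ)) with hadj | hadj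
        · -- j = i - 1 : positions ĵ < î = ĵ⁺ < î⁺
          have hpos : j.succ = i.castSucc := Fin.ext (by simp [hadj])
          -- φv values: at ĵ : A, at î : D, at î⁺ : B  where D = φw ĵ, A = φw î, B = φw î⁺
          have hvj : phi cs v j.castSucc = phi cs w i.castSucc := by
            rw [hphiv]
            show phi cs w ((sw j) j.castSucc) = _
            unfold sw
            rw [Equiv.swap_apply_left, hpos]
          have hvj' : phi cs v j.succ = phi cs w j.castSucc := by
            rw [hphiv]
            show phi cs w ((sw j) j.succ) = _
            unfold sw
            rw [Equiv.swap_apply_right]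
          have hvi : phi cs v i.castSucc = phi cs w j.castSucc := by
            rw [← hpos, hvj']
          have hvi' : phi cs v i.succ = phi cs w i.succ := by
            rw [hphiv]
            show phi cs w ((sw j) i.succ) = _
            rw [sw_apply_succ_of_far (by omega) (by omega)]
          -- IH at (v, j): A < D
          rw [hvj, hvj'] at hIHvj
          -- case on ascent of v at i
          by_cases hvasc : ℓ v < ℓ (v * s i)
          · have hIHvi := IH v i hlvN hvasc
            rw [hvi, hvi'] at hIHvi
            -- D < B, but B < A < D
            have := lt_trans (lt_trans hBA hIHvj) hIHvi
            exact lt_irrefl _ this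
          · push_neg at hvasc
            have hlu' : ℓ (v * s i) + 1 = ℓ v := by
              have hne := cs.length_mul_simple_ne v i
              rcases cs.length_mul_simple v i with h | h <;> omega
            set u' := v * s i with hu'
            have hlu'N : ℓ u' ≤ N := by omega
            have hphiu' : phi cs u' = phi cs v * sw i := by rw [hu', map_mul, phi_simple]
            by_cases hu'asc : ℓ u' < ℓ (u' * s j)
            · have hIHu'j := IH u' j hlu'N hu'asc
              -- φu' at ĵ : A, at ĵ⁺ = î : B ; IH gives A < B, contradiction
              have k1 : phi cs u' j.castSucc = phi cs w i.castSucc := by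
                rw [hphiu']
                show phi cs v ((sw i) j.castSucc) = _
                rw [sw_apply_castSucc_of_far (by omega) (by omega), hvj]
              have k2 : phi cs u' j.succ = phi cs w i.succ := by
                rw [hphiu', hpos]
                show phi cs v ((sw i) i.castSucc) = _
                unfold sw
                rw [Equiv.swap_apply_left, hvi']
              rw [k1, k2] at hIHu'j
              exact absurd hIHu'j hBA'
            · push_neg at hu'asc
              have hlu's : ℓ (u' * s j) + 1 = ℓ u' := by
                have hne := cs.length_mul_simple_ne u' j
                rcases cs.length_mul_simple u' j with h | h <;> omega
              have hbraid : u' * s j = w * (s i * s j * s i) := by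
                rw [hu', hv]
                calc w * s j * s i * s j = w * (s j * s i * s j) := by group
                  _ = w * (s i * s j * s i) := by
                      rw [simple_braid cs (by omega) (Ne.symm hij)]
              have hcon : ℓ (w * s i) ≤ ℓ (u' * s j) + 2 := by
                have : w * s i = (u' * s j) * (s i * s j) := by
                  rw [hbraid]
                  calc w * s i = w * (s i * (s j * s i * (s i * s j)) ) := by
                        rw [show s j * s i * (s i * s j) = s j * (s i * s i) * s j from by group,
                          cs.simple_mul_simple_self]
                        rw [show s j * 1 * s j = s j * s j from by group,
                          cs.simple_mul_simple_self, mul_one]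
                    _ = w * (s i * s j * s i) * (s i * s j) := by group
                rw [this]
                calc ℓ ((u' * s j) * (s i * s j)) ≤ ℓ (u' * s j) + ℓ (s i * s j) :=
                      cs.length_mul_le _ _
                  _ ≤ ℓ (u' * s j) + (ℓ (s i) + ℓ (s j)) := by
                      have := cs.length_mul_le (s i) (s j)
                      omega
                  _ = ℓ (u' * s j) + 2 := by rw [cs.length_simple, cs.length_simple]
              omega
        · -- i + 1 = j : positions î < î⁺ = ĵ < ĵ⁺
          have hpos : j.castSucc = i.succ := Fin.ext (by simp [← hadj])
          have hvi : phi cs v i.castSucc = phi cs w i.castSucc := by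
            rw [hphiv]
            show phi cs w ((sw j) i.castSucc) = _
            rw [sw_apply_castSucc_of_far (by omega) (by omega)]
          have hvi' : phi cs v i.succ = phi cs w j.succ := by
            rw [hphiv, ← hpos]
            show phi cs w ((sw j) j.castSucc) = _
            unfold sw
            rw [Equiv.swap_apply_left]
          have hvjs : phi cs v j.succ = phi cs w i.succ := by
            rw [hphiv]
            show phi cs w ((sw j) j.succ) = _
            unfold sw
            rw [Equiv.swap_apply_right, hpos]
          -- IH at (v, j): φv ĵ < φv ĵ⁺ : C < B where C = φw ĵ⁺... 
          -- φv ĵ = φv (î⁺) = φw ĵ⁺ =: C ; φv ĵ⁺ = φw ĵ = φw î⁺ =: B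
          have hvj : phi cs v j.castSucc = phi cs w j.succ := by rw [hpos, hvi']
          rw [hvj, hvjs] at hIHvj
          -- now hIHvj : C < B ; and hBA : B < A
          by_cases hvasc : ℓ v < ℓ (v * s i)
          · have hIHvi := IH v i hlvN hvasc
            rw [hvi, hvi'] at hIHvi
            -- A < C, but C < B < A
            have := lt_trans (lt_trans hIHvi hIHvj) hBA
            exact lt_irrefl _ this
          · push_neg at hvasc
            have hlu' : ℓ (v * s i) + 1 = ℓ v := by
              have hne := cs.length_mul_simple_ne v i
              rcases cs.length_mul_simple v i with h | h <;> omega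
            set u' := v * s i with hu'
            have hlu'N : ℓ u' ≤ N := by omega
            have hphiu' : phi cs u' = phi cs v * sw i := by rw [hu', map_mul, phi_simple]
            by_cases hu'asc : ℓ u' < ℓ (u' * s j)
            · have hIHu'j := IH u' j hlu'N hu'asc
              -- φu' at ĵ = î⁺ : A ; at ĵ⁺ : B ; IH gives A < B, contradiction
              have k1 : phi cs u' j.castSucc = phi cs w i.castSucc := by
                rw [hphiu', hpos]
                show phi cs v ((sw i) i.succ) = _
                unfold sw
                rw [Equiv.swap_apply_right, hvi]
              have k2 : phi cs u' j.succ = phi cs w i.succ := by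
                rw [hphiu']
                show phi cs v ((sw i) j.succ) = _
                rw [sw_apply_succ_of_far (by omega) (by omega), hvjs]
              rw [k1, k2] at hIHu'j
              exact absurd hIHu'j hBA'
            · push_neg at hu'asc
              have hlu's : ℓ (u' * s j) + 1 = ℓ u' := by
                have hne := cs.length_mul_simple_ne u' j
                rcases cs.length_mul_simple u' j with h | h <;> omega
              have hbraid : u' * s j = w * (s i * s j * s i) := by
                rw [hu', hv]
                calc w * s j * s i * s j = w * (s j * s i * s j) := by group
                  _ = w * (s i * s j * s i) := by
                      rw [simple_braid cs (by omega) (Ne.symm hij)]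
              have hcon : ℓ (w * s i) ≤ ℓ (u' * s j) + 2 := by
                have : w * s i = (u' * s j) * (s i * s j) := by
                  rw [hbraid]
                  calc w * s i = w * (s i * (s j * s i * (s i * s j)) ) := by
                        rw [show s j * s i * (s i * s j) = s j * (s i * s i) * s j from by group,
                          cs.simple_mul_simple_self]
                        rw [show s j * 1 * s j = s j * s j from by group,
                          cs.simple_mul_simple_self, mul_one]
                    _ = w * (s i * s j * s i) * (s i * s j) := by group
                rw [this]
                calc ℓ ((u' * s j) * (s i * s j)) ≤ ℓ (u' * s j) + ℓ (s i * s j) :=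
                      cs.length_mul_le _ _
                  _ ≤ ℓ (u' * s j) + (ℓ (s i) + ℓ (s j)) := by
                      have := cs.length_mul_le (s i) (s j)
                      omega
                  _ = ℓ (u' * s j) + 2 := by rw [cs.length_simple, cs.length_simple]
              omega

/-- Fundamental: length equals the inversion number of the associated permutation. -/
lemma length_eq_inv (w : W) : ℓ w = inv (phi cs w) := by
  -- ≥ : reduced word
  obtain ⟨ω, hω, hprod⟩ := cs.exists_reduced_word w
  have hge : inv (phi cs w) ≤ ℓ w := by
    calc inv (phi cs w) = inv (phi cs (π ω)) := by rw [← hprod]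
      _ ≤ ω.length := inv_phi_wordProd_le cs ω
      _ = ℓ w := by rw [hprod]; exact hω.symm
  -- ≤ : strong induction on length
  clear hω hprod ω
  have hle : ∀ (N : ℕ) (w : W), ℓ w ≤ N → ℓ w ≤ inv (phi cs w) := by
    intro N
    induction N with
    | zero => intro w hN; omega
    | succ N IH =>
        intro w hN
        rcases eq_or_ne w 1 with rfl | hw
        · simp
        obtain ⟨j, hj⟩ := cs.exists_rightDescent_of_ne_one hw
        have hj' : ℓ (w * s j) < ℓ w := hj
        have hlwj : ℓ (w * s j) + 1 = ℓ w := by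
          rcases cs.length_mul_simple w j with h | h
          · omega
          · exact h
        have hwpos : 1 ≤ ℓ w := by
          by_contra hc
          exact hw (cs.length_eq_zero_iff.mp (by omega))
        set v := w * s j with hv
        have hvascj : ℓ v < ℓ (v * s j) := by
          have : v * s j = w := by rw [hv]; simp
          rw [this]; omega
        have hIH := IH v (by omega)
        have htrans := ascent_transfer cs (ℓ v) v j le_rfl hvascj
        have hphiv : phi cs v = phi cs w * sw j := by rw [hv, map_mul, phi_simple]
        have hinc : inv (phi cs v * sw j) = inv (phi cs v) + 1 :=
          inv_mul_sw_of_ascent htrans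
        have hws : phi cs v * sw j = phi cs w := by
          rw [hphiv, mul_assoc, sw_sw, mul_one]
        rw [hws] at hinc
        omega
  have := hle (ℓ w) w le_rfl
  omega

/-- Injectivity of the permutation representation. -/
lemma phi_injective : Function.Injective (phi cs) := by
  intro a b hab
  have h1 : phi cs (a * b⁻¹) = 1 := by
    rw [map_mul, map_inv, hab, mul_inv_cancel]
  have h2 : ℓ (a * b⁻¹) = 0 := by
    rw [length_eq_inv, h1, inv_one]
  have h3 : a * b⁻¹ = 1 := cs.length_eq_zero_iff.mp h2
  exact mul_inv_eq_one.mp h3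

end CoxeterPart

section Words

open CoxeterSystem

variable {W : Type*} [Group W] (cs : CoxeterSystem (CoxeterMatrix.Aₙ n) W)

/-- The ascending word `[a, a+1, ..., n-1]`. -/
def ascw (a : ℕ) : List (Fin n) := (List.finRange n).drop a

/-- The descending word `[n-1, ..., a]`. -/
def descw (a : ℕ) : List (Fin n) := (ascw a).reverse

/-- Word for the longest element of the parabolic on `{a, ..., n-1}`. -/
def Rw : ℕ → ℕ → List (Fin n)
  | 0, _ => []
  | (f+1), a => descw a ++ Rw f (a+1)

/-- Value function of the cycle `a ↦ a+1 ↦ ... ↦ m ↦ a`. -/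
def rhov (m a v : ℕ) : ℕ := if v = m then a else if a ≤ v then v + 1 else v

/-- Value function of the inverse cycle. -/
def zetav (m a v : ℕ) : ℕ := if v = a then m else if a < v ∧ v ≤ m then v - 1 else v

/-- Value function of the reversal of the block `[a, m]`. -/
def rev_v (m a v : ℕ) : ℕ := if a ≤ v ∧ v ≤ m then m + a - v else v

lemma phi_ascw : ∀ (k a : ℕ), a + k = n → ∀ x : Fin (n + 1),
    ((phi cs (cs.wordProd (ascw a))) x).val = rhov n a x.val := by
  intro k
  induction k with
  | zero =>
      intro a ha x
      have hnil : ascw (n := n) a = [] := by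
        unfold ascw
        apply List.drop_eq_nil_of_le
        simp only [List.length_finRange]
        omega
      rw [hnil, cs.wordProd_nil, map_one]
      have hx := x.isLt
      simp only [Equiv.Perm.one_apply]
      unfold rhov
      split_ifs <;> omega
  | succ k IH =>
      intro a ha x
      have haln : a < n := by omega
      have hdrop : ascw (n := n) a = ⟨a, haln⟩ :: ascw (a + 1) := by
        unfold ascw
        rw [List.drop_eq_getElem_cons (by simp [haln])]
        congr 1
        simp
      rw [hdrop, cs.wordProd_cons, map_mul, phi_simple, Equiv.Perm.mul_apply]
      have hy := IH (a + 1) (by omega) x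
      have hsw := sw_val_cases ⟨a, haln⟩ ((phi cs (cs.wordProd (ascw (a + 1)))) x)
      have hval : ((⟨a, haln⟩ : Fin n) : ℕ) = a := rfl
      rw [hval] at hsw
      have hxlt := x.isLt
      unfold rhov at hy ⊢
      split_ifs at hy ⊢ <;> omega

lemma phi_descw (k a : ℕ) (ha : a + k = n) (x : Fin (n + 1)) :
    ((phi cs (cs.wordProd (descw a))) x).val = zetav n a x.val := by
  have hinv : phi cs (cs.wordProd (descw a)) = (phi cs (cs.wordProd (ascw a)))⁻¹ := by
    unfold descw
    rw [cs.wordProd_reverse, map_inv]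
  have hy : ∀ t : Fin (n + 1), ((phi cs (cs.wordProd (ascw a))) t).val = rhov n a t.val :=
    phi_ascw cs k a ha
  have hz : zetav n a x.val < n + 1 := by
    have := x.isLt
    unfold zetav
    split_ifs <;> omega
  have hsy : (phi cs (cs.wordProd (ascw a))) ⟨zetav n a x.val, hz⟩ = x := by
    apply Fin.ext
    rw [hy ⟨zetav n a x.val, hz⟩]
    show rhov n a (zetav n a x.val) = x.val
    have := x.isLt
    unfold rhov zetav
    split_ifs <;> omega
  rw [hinv]
  have hfin : ((phi cs (cs.wordProd (ascw a)))⁻¹) x = ⟨zetav n a x.val, hz⟩ := by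
    conv_lhs => rw [← hsy]
    exact Equiv.symm_apply_apply _ _
  rw [hfin]

lemma phi_Rw : ∀ (f a : ℕ), f + a = n → ∀ x : Fin (n + 1),
    ((phi cs (cs.wordProd (Rw f a))) x).val = rev_v n a x.val := by
  intro f
  induction f with
  | zero =>
      intro a ha x
      show ((phi cs (cs.wordProd ([] : List (Fin n)))) x).val = _
      rw [cs.wordProd_nil, map_one]
      have := x.isLt
      simp only [Equiv.Perm.one_apply]
      unfold rev_v
      split_ifs <;> omega
  | succ f IH =>
      intro a ha x
      show ((phi cs (cs.wordProd (descw a ++ Rw f (a + 1)))) x).val = _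
      rw [cs.wordProd_append, map_mul, Equiv.Perm.mul_apply]
      rw [phi_descw cs (f + 1) a (by omega), IH (a + 1) (by omega)]
      have := x.isLt
      unfold zetav rev_v
      split_ifs <;> omega

lemma mem_ascw {a : ℕ} {i : Fin n} (h : i ∈ ascw (n := n) a) : a ≤ i.val := by
  unfold ascw at h
  obtain ⟨k, hk, he⟩ := List.mem_iff_getElem.mp h
  simp only [List.getElem_drop, List.getElem_finRange, Fin.cast_mk] at he
  rw [← he]
  simp

lemma mem_Rw : ∀ (f a : ℕ) (i : Fin n), i ∈ Rw (n := n) f a → a ≤ i.val := by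
  intro f
  induction f with
  | zero => intro a i h; exact absurd h List.not_mem_nil
  | succ f IH =>
      intro a i h
      rcases List.mem_append.mp h with h | h
      · exact mem_ascw (List.mem_reverse.mp h)
      · have := IH (a + 1) i h
        omega

lemma wordProd_mem_closure {J : Set (Fin n)} {ω : List (Fin n)} (h : ∀ i ∈ ω, i ∈ J) :
    cs.wordProd ω ∈ Subgroup.closure (cs.simple '' J) := by
  induction ω with
  | nil => rw [cs.wordProd_nil]; exact one_mem _
  | cons i ω IH =>
      rw [cs.wordProd_cons]
      exact mul_mem (Subgroup.subset_closure ⟨i, h i (by simp), rfl⟩)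
        (IH fun j hj => h j (by simp [hj]))

lemma fix_of_mem_closure {J : Set (Fin n)} {a : ℕ} (hJ : ∀ i ∈ J, a ≤ i.val) {v : W}
    (hv : v ∈ Subgroup.closure (cs.simple '' J)) :
    ∀ x : Fin (n + 1), x.val < a → phi cs v x = x := by
  refine Subgroup.closure_induction ?_ ?_ ?_ ?_ hv
  · rintro g ⟨i, hiJ, rfl⟩ x hx
    rw [phi_simple]
    apply Fin.ext
    rw [sw_apply_val]
    have := hJ i hiJ
    rw [if_neg (by omega), if_neg (by omega)]
  · intro x hx
    simp
  · intro g h _ _ ihg ihh x hx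
    rw [map_mul, Equiv.Perm.mul_apply, ihh x hx, ihg x hx]
  · intro g _ ihg x hx
    rw [map_inv]
    conv_lhs => rw [← ihg x hx]
    exact Equiv.symm_apply_apply _ _

lemma bruhat_length_le {u w : W} (h : cs.bruhatLE u w) : cs.length u ≤ cs.length w := by
  obtain ⟨ω, ω', hred, hw, hsub, hu⟩ := h
  have h1 : cs.length u ≤ ω'.length := by rw [← hu]; exact cs.length_wordProd_le ω'
  have h2 : ω'.length ≤ ω.length := hsub.length_le
  have h3 : cs.length w = ω.length := by rw [← hw]; exact hred
  omega

lemma bruhat_eq_of_length_ge {u w : W} (h : cs.bruhatLE u w) (hlen : cs.length w ≤ cs.length u) :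
    u = w := by
  obtain ⟨ω, ω', hred, hw, hsub, hu⟩ := h
  have h1 : cs.length u ≤ ω'.length := by rw [← hu]; exact cs.length_wordProd_le ω'
  have h2 : ω'.length ≤ ω.length := hsub.length_le
  have h3 : cs.length w = ω.length := by rw [← hw]; exact hred
  have : ω' = ω := hsub.eq_of_length (by omega)
  rw [← hu, this, hw]

end Words

section Counting

/-- The pairs `(p₁, p₂)` with `a ≤ p₁ < p₂`. -/
def PS (a : ℕ) : Finset (Fin (n + 1) × Fin (n + 1)) :=
  Finset.univ.filter fun p => a ≤ p.1.val ∧ p.1 < p.2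

lemma invSet_eq_PS {σ : Equiv.Perm (Fin (n + 1))} {a : ℕ}
    (hσ : ∀ x : Fin (n + 1), (σ x).val = rev_v n a x.val) : invSet σ = PS a := by
  ext p
  rw [mem_invSet, PS, Finset.mem_filter]
  have h1 := p.1.isLt
  have h2 := p.2.isLt
  rw [Fin.lt_def, Fin.lt_def, hσ p.1, hσ p.2]
  simp only [Finset.mem_univ, true_and]
  unfold rev_v
  split_ifs <;> omega

lemma invSet_subset_PS {σ : Equiv.Perm (Fin (n + 1))} {a : ℕ}
    (hfix : ∀ x : Fin (n + 1), x.val < a → σ x = x) : invSet σ ⊆ PS a := by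
  intro p hp
  rw [mem_invSet] at hp
  obtain ⟨h1, h2⟩ := hp
  rw [PS, Finset.mem_filter]
  refine ⟨Finset.mem_univ _, ?_, h1⟩
  by_contra hc
  push_neg at hc
  have e1 : σ p.1 = p.1 := hfix _ hc
  have hlt : (σ p.2).val < a := by
    rw [Fin.lt_def, e1] at h2
    omega
  have e2 : σ (σ p.2) = σ p.2 := hfix _ hlt
  have e3 : σ p.2 = p.2 := σ.injective e2
  rw [Fin.lt_def] at h1 h2
  rw [e1, e3] at h2
  omega

lemma card_PS_step (hn : 2 ≤ n) : (PS (n := n) 2).card + (n - 1) ≤ (PS (n := n) 1).card := by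
  classical
  set Q : Finset (Fin (n + 1) × Fin (n + 1)) :=
    Finset.univ.filter (fun p => p.1.val = 1 ∧ p.1 < p.2) with hQ
  have hQcard' : Q.card = (Finset.univ : Finset (Fin (n - 1))).card := by
    refine Finset.card_bij' (fun p hp => (⟨p.2.val - 2, by
        rw [hQ, Finset.mem_filter, Fin.lt_def] at hp
        have := p.2.isLt
        omega⟩ : Fin (n - 1)))
      (fun k _ => ((⟨1, by omega⟩ : Fin (n + 1)), (⟨k.val + 2, by
        have := k.isLt
        omega⟩ : Fin (n + 1)))) ?_ ?_ ?_ ?_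
    · intro p hp
      exact Finset.mem_univ _
    · intro k _
      rw [hQ, Finset.mem_filter]
      refine ⟨Finset.mem_univ _, rfl, ?_⟩
      rw [Fin.lt_def]
      show 1 < k.val + 2
      omega
    · intro p hp
      rw [hQ, Finset.mem_filter, Fin.lt_def] at hp
      have h2 := p.2.isLt
      apply Prod.ext
      · apply Fin.ext
        show (1 : ℕ) = p.1.val
        omega
      · apply Fin.ext
        show p.2.val - 2 + 2 = p.2.val
        omega
    · intro k _
      apply Fin.ext
      show k.val + 2 - 2 = k.val
      omega
  have hQcard : Q.card = n - 1 := by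
    rw [hQcard', Finset.card_univ, Fintype.card_fin]
  have hsub : PS 2 ∪ Q ⊆ PS (n := n) 1 := by
    intro p hp
    rw [PS, Finset.mem_filter]
    rcases Finset.mem_union.mp hp with h | h
    · rw [PS, Finset.mem_filter] at h
      exact ⟨Finset.mem_univ _, by omega, h.2.2⟩
    · rw [hQ, Finset.mem_filter] at h
      exact ⟨Finset.mem_univ _, by omega, h.2.2⟩
  have hdisj : Disjoint (PS (n := n) 2) Q := by
    rw [Finset.disjoint_left]
    intro p h1 h2
    rw [PS, Finset.mem_filter] at h1
    rw [hQ, Finset.mem_filter] at h2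
    omega
  calc (PS (n := n) 2).card + (n - 1) = (PS 2 ∪ Q).card := by
        rw [Finset.card_union_of_disjoint hdisj, hQcard]
    _ ≤ (PS (n := n) 1).card := Finset.card_le_card hsub

lemma inv_eq_n_of_rho {σ : Equiv.Perm (Fin (n + 1))}
    (hσ : ∀ x : Fin (n + 1), (σ x).val = rhov n 0 x.val) : inv σ = n := by
  classical
  have hset : invSet σ =
      Finset.univ.filter (fun p : Fin (n + 1) × Fin (n + 1) => p.2.val = n ∧ p.1.val < n) := by
    ext p
    rw [mem_invSet, Finset.mem_filter]
    have h1 := p.1.isLt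
    have h2 := p.2.isLt
    rw [Fin.lt_def, Fin.lt_def, hσ p.1, hσ p.2]
    simp only [Finset.mem_univ, true_and]
    unfold rhov
    split_ifs <;> omega
  have hcard : (Finset.univ.filter
      (fun p : Fin (n + 1) × Fin (n + 1) => p.2.val = n ∧ p.1.val < n)).card
      = (Finset.univ : Finset (Fin n)).card := by
    refine Finset.card_bij' (fun p hp => (⟨p.1.val, by
        rw [Finset.mem_filter] at hp
        exact hp.2.2⟩ : Fin n))
      (fun k _ => ((⟨k.val, by omega⟩ : Fin (n + 1)), (⟨n, by omega⟩ : Fin (n + 1)))) ?_ ?_ ?_ ?_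
    · intro p hp
      exact Finset.mem_univ _
    · intro k _
      rw [Finset.mem_filter]
      have := k.isLt
      exact ⟨Finset.mem_univ _, rfl, this⟩
    · intro p hp
      rw [Finset.mem_filter] at hp
      apply Prod.ext
      · apply Fin.ext; rfl
      · apply Fin.ext
        show (n : ℕ) = p.2.val
        omega
    · intro k _
      apply Fin.ext; rfl
  rw [inv, hset, hcard, Finset.card_univ, Fintype.card_fin]

lemma card_PS2_le_inv_xy {σ : Equiv.Perm (Fin (n + 1))}
    (hσ : ∀ x : Fin (n + 1), (σ x).val = rhov n 0 (rev_v n 1 x.val)) :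
    (PS (n := n) 2).card ≤ inv σ := by
  apply Finset.card_le_card
  intro p hp
  rw [PS, Finset.mem_filter] at hp
  obtain ⟨-, h1, h2⟩ := hp
  rw [mem_invSet]
  refine ⟨h2, ?_⟩
  have ha := p.1.isLt
  have hb := p.2.isLt
  rw [Fin.lt_def] at h2 ⊢
  rw [hσ p.1, hσ p.2]
  unfold rhov rev_v
  split_ifs <;> omega

end Counting


section Identification

open CoxeterSystem

variable {W : Type*} [Group W] (cs : CoxeterSystem (CoxeterMatrix.Aₙ n) W)

lemma w0J_eq (w0J : Set (Fin n) → W)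
    (hw0J : ∀ J : Set (Fin n), w0J J ∈ Subgroup.closure (cs.simple '' J) ∧
      ∀ v ∈ Subgroup.closure (cs.simple '' J), cs.bruhatLE v (w0J J))
    (a : ℕ) (ha : a ≤ n) :
    w0J {i : Fin n | a ≤ i.val} = cs.wordProd (Rw (n - a) a) := by
  set J : Set (Fin n) := {i | a ≤ i.val} with hJ
  set c := cs.wordProd (Rw (n := n) (n - a) a) with hc
  have hcmem : c ∈ Subgroup.closure (cs.simple '' J) :=
    wordProd_mem_closure cs (fun i hi => mem_Rw (n - a) a i hi)
  have hle : cs.bruhatLE c (w0J J) := (hw0J J).2 c hcmem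
  have hcval : ∀ x : Fin (n + 1), ((phi cs c) x).val = rev_v n a x.val :=
    phi_Rw cs (n - a) a (by omega)
  have hlc : cs.length c = (PS (n := n) a).card := by
    rw [length_eq_inv cs c, inv, invSet_eq_PS hcval]
  have hfix : ∀ x : Fin (n + 1), x.val < a → (phi cs (w0J J)) x = x :=
    fix_of_mem_closure cs (fun i hi => hi) (hw0J J).1
  have hlw : cs.length (w0J J) ≤ (PS (n := n) a).card := by
    rw [length_eq_inv cs (w0J J), inv]
    exact Finset.card_le_card (invSet_subset_PS hfix)
  exact (bruhat_eq_of_length_ge cs hle (by omega)).symm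

end Identification

end TriAux


/-- In type `Aₙ` (the symmetric group on `n+1` letters, simple reflections labelled
`1, …, n`, with label `k` corresponding to the index `k - 1 : Fin n`):
`(w₀^(I - {1}) w₀^I) ▷ w₀^(I - {1}) = w₀^(I - {1, 2})`. -/
theorem tri_typeA_first {W : Type*} [Group W] [Finite W] {n : ℕ} (hn : 2 ≤ n)
    (cs : CoxeterSystem (CoxeterMatrix.Aₙ n) W)
    (tri : W → W → W)
    (htri : ∀ x y : W, cs.IsUniqueBruhatMin (cs.triSet x y) (tri x y))
    (w0J : Set (Fin n) → W)
    (hw0J : ∀ J : Set (Fin n), w0J J ∈ Subgroup.closure (cs.simple '' J) ∧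
      ∀ v ∈ Subgroup.closure (cs.simple '' J), cs.bruhatLE v (w0J J))
 :
    tri (w0J {i : Fin n | i.val ≠ 0} * w0J Set.univ) (w0J {i : Fin n | i.val ≠ 0}) =
      w0J {i : Fin n | i.val ≠ 0 ∧ i.val ≠ 1} := by
  classical
  have e1 : {i : Fin n | i.val ≠ 0} = {i : Fin n | 1 ≤ i.val} := by
    ext i
    simp [Nat.one_le_iff_ne_zero]
  have e2 : {i : Fin n | i.val ≠ 0 ∧ i.val ≠ 1} = {i : Fin n | 2 ≤ i.val} := by
    ext i
    simp only [Set.mem_setOf_eq]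
    omega
  have e0 : (Set.univ : Set (Fin n)) = {i : Fin n | 0 ≤ i.val} := by
    ext i
    simp
  rw [e1, e2, e0, TriAux.w0J_eq cs w0J hw0J 1 (by omega),
    TriAux.w0J_eq cs w0J hw0J 0 (by omega), TriAux.w0J_eq cs w0J hw0J 2 hn]
  set y := cs.wordProd (TriAux.Rw (n := n) (n - 1) 1) with hy
  set w0 := cs.wordProd (TriAux.Rw (n := n) (n - 0) 0) with hw0
  set mK := cs.wordProd (TriAux.Rw (n := n) (n - 2) 2) with hmK
  set x := y * w0 with hx
  have hyv : ∀ t : Fin (n + 1), ((TriAux.phi cs y) t).val = TriAux.rev_v n 1 t.val :=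
    TriAux.phi_Rw cs (n - 1) 1 (by omega)
  have hw0v : ∀ t : Fin (n + 1), ((TriAux.phi cs w0) t).val = TriAux.rev_v n 0 t.val :=
    TriAux.phi_Rw cs (n - 0) 0 (by omega)
  have hmKv : ∀ t : Fin (n + 1), ((TriAux.phi cs mK) t).val = TriAux.rev_v n 2 t.val :=
    TriAux.phi_Rw cs (n - 2) 2 (by omega)
  have hxv : ∀ t : Fin (n + 1), ((TriAux.phi cs x) t).val = TriAux.rhov n 0 t.val := by
    intro t
    rw [hx, map_mul, Equiv.Perm.mul_apply, hyv, hw0v]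
    have := t.isLt
    unfold TriAux.rhov TriAux.rev_v
    split_ifs <;> omega
  have hx_eq : x = cs.wordProd (TriAux.ascw 0) := by
    apply TriAux.phi_injective cs
    apply Equiv.ext
    intro t
    apply Fin.ext
    rw [hxv t, TriAux.phi_ascw cs n 0 (by omega) t]
  have hlx : cs.length x = n := by
    rw [TriAux.length_eq_inv cs x, TriAux.inv_eq_n_of_rho hxv]
  have hly : cs.length y = (TriAux.PS (n := n) 1).card := by
    rw [TriAux.length_eq_inv cs y, TriAux.inv, TriAux.invSet_eq_PS hyv]
  have hlmK : cs.length mK = (TriAux.PS (n := n) 2).card := by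
    rw [TriAux.length_eq_inv cs mK, TriAux.inv, TriAux.invSet_eq_PS hmKv]
  set u0 := cs.wordProd (TriAux.ascw (n := n) 1) with hu0
  have hu0v : ∀ t : Fin (n + 1), ((TriAux.phi cs u0) t).val = TriAux.rhov n 1 t.val :=
    TriAux.phi_ascw cs (n - 1) 1 (by omega)
  have hu0y : u0 * y = mK := by
    apply TriAux.phi_injective cs
    apply Equiv.ext
    intro t
    apply Fin.ext
    rw [map_mul, Equiv.Perm.mul_apply, hu0v ((TriAux.phi cs y) t), hyv t, hmKv t]
    have := t.isLt
    unfold TriAux.rhov TriAux.rev_v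
    split_ifs <;> omega
  have hbru : cs.bruhatLE u0 x := by
    refine ⟨TriAux.ascw 0, TriAux.ascw 1, ?_, hx_eq.symm, ?_, rfl⟩
    · show cs.length (cs.wordProd (TriAux.ascw 0)) = (TriAux.ascw (n := n) 0).length
      rw [← hx_eq, hlx]
      show n = ((List.finRange n).drop 0).length
      simp
    · show List.Sublist (TriAux.ascw (n := n) 1) (TriAux.ascw 0)
      unfold TriAux.ascw
      rw [List.drop_zero]
      exact List.drop_sublist 1 _
  have hmem : mK ∈ cs.triSet x y := ⟨u0, hbru, hu0y.symm⟩
  have hPSstep := TriAux.card_PS_step (n := n) hn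
  have hmin : ∀ z' ∈ cs.triSet x y, cs.bruhatLE z' mK → z' = mK := by
    intro z hz hle
    obtain ⟨u, hu, rfl⟩ := hz
    have hkey : (TriAux.PS (n := n) 2).card ≤ cs.length (u * y) := by
      obtain ⟨ω, ω', hred, hπ, hsub, hπ'⟩ := hu
      have hωlen : ω.length = n := by
        have hh : cs.length (cs.wordProd ω) = ω.length := hred
        rw [hπ, hlx] at hh
        omega
      rcases eq_or_lt_of_le hsub.length_le with heq | hlt
      · have hωω : ω' = ω := hsub.eq_of_length heq
        have hux : u = x := by rw [← hπ', hωω, hπ]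
        rw [hux]
        have hxyv : ∀ t : Fin (n + 1), ((TriAux.phi cs (x * y)) t).val
            = TriAux.rhov n 0 (TriAux.rev_v n 1 t.val) := by
          intro t
          rw [map_mul, Equiv.Perm.mul_apply, hxv ((TriAux.phi cs y) t), hyv t]
        rw [TriAux.length_eq_inv cs (x * y)]
        exact TriAux.card_PS2_le_inv_xy hxyv
      · have hlu : cs.length u ≤ n - 1 := by
          have hh : cs.length u ≤ ω'.length := by
            rw [← hπ']
            exact cs.length_wordProd_le ω'
          omega
        have hlow : cs.length y - cs.length u ≤ cs.length (u * y) :=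
          cs.length_mul_ge_length_sub_length' u y
        omega
    exact TriAux.bruhat_eq_of_length_ge cs hle (by omega)
  exact ((htri x y).2 mK hmem hmin).symm
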